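/- arXiv:2005.07120 — 3 statements merged into one kernel-verified Lean document; each statement's English description precedes it below -/
import Mathlib

section
/- Let p be a prime number and λ an infinite cardinal with λ^ℵ₀ = λ. Then there is a universal abelian p-group for purity of cardinality λ: an abelian p-group U with |U| = λ such that every abelian p-group G with |G| ≤ λ admits a pure embedding into U. -/
/-- An abelian `p`-group: every element is annihilated by some power of `p`,
i.e. every element has order `p ^ n` for some natural number `n`. -/
def IsAbelianPGroup (p : ℕ) (G : Type) [AddCommGroup G] : Prop :=
  ∀ g : G, ∃ n : ℕ, p ^ n • g = 0

/-- A pure embedding: an injective group homomorphism whose image is a pure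
subgroup, i.e. `n U ∩ f[G] = n f[G]` for every natural number `n`. -/
def IsPureEmbedding {G U : Type} [AddCommGroup G] [AddCommGroup U] (f : G →+ U) : Prop :=
  Function.Injective f ∧ ∀ (n : ℕ) (g : G), (∃ u : U, n • u = f g) → ∃ g' : G, n • g' = g

/-- There is a universal abelian `p`-group for purity of cardinality `lam`. -/
def HasUniversalPGroup (p : ℕ) (lam : Cardinal) : Prop :=
  ∃ (U : Type) (_ : AddCommGroup U), IsAbelianPGroup p U ∧ Cardinal.mk U = lam ∧
    ∀ (G : Type) (_ : AddCommGroup G), IsAbelianPGroup p G → Cardinal.mk G ≤ lam →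
      ∃ f : G →+ U, IsPureEmbedding f


section Aux

variable {p : ℕ}

lemma exists_int_inv (hp : p.Prime) {t : ℤ} (ht : ¬ (p:ℤ) ∣ t) (E : ℕ) :
    ∃ t' : ℤ, (p:ℤ) ^ E ∣ t * t' - 1 := by
  have hpz : Prime (p : ℤ) := Nat.prime_iff_prime_int.1 hp
  have hc : IsCoprime ((p:ℤ) ^ E) t := (IsCoprime.pow_left ((hpz.coprime_iff_not_dvd).2 ht))
  obtain ⟨a, b, hab⟩ := hc
  exact ⟨b, ⟨-a, by linear_combination hab⟩⟩

lemma zpow_smul_eq_zero {G : Type} [AddCommGroup G] {g : G} {e : ℕ} (hg : p ^ e • g = 0)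
    (d : ℤ) (hd : (p:ℤ) ^ e ∣ d) : d • g = 0 := by
  obtain ⟨c, rfl⟩ := hd
  rw [mul_comm, mul_smul]
  have : ((p:ℤ)) ^ e • g = 0 := by
    have : ((p ^ e : ℕ) : ℤ) • g = 0 := by rw [natCast_zsmul]; exact hg
    simpa using this
  rw [this, smul_zero]

lemma coprime_zsmul_surj {G : Type} [AddCommGroup G] (hp : p.Prime) {t : ℤ}
    (ht : ¬ (p:ℤ) ∣ t) {g : G} {e : ℕ} (hg : p ^ e • g = 0) : ∃ y : G, t • y = g := by
  obtain ⟨t', hd⟩ := exists_int_inv hp ht e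
  refine ⟨t' • g, ?_⟩
  have h2 : (t * t' - 1) • g = 0 := zpow_smul_eq_zero hg _ hd
  have h3 := sub_smul (t * t') 1 g
  rw [h2, one_smul] at h3
  have h1 : (t * t') • g = g := sub_eq_zero.mp h3.symm
  rw [← mul_smul, h1]

lemma graph_toHom {G W : Type} [AddCommGroup G] [AddCommGroup W] (Γ : AddSubgroup (G × W))
    (htot : ∀ g : G, ∃ w, (g, w) ∈ Γ) (hfun : ∀ w : W, ((0:G), w) ∈ Γ → w = 0) :
    ∃ φ : G →+ W, ∀ g, (g, φ g) ∈ Γ := by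
  choose f hf using htot
  have huniq : ∀ g w, (g, w) ∈ Γ → w = f g := by
    intro g w hw
    have hsub : ((0:G), w - f g) ∈ Γ := by
      have := Γ.sub_mem hw (hf g)
      simpa using this
    have := hfun _ hsub
    have := sub_eq_zero.mp this
    exact this
  have hzero : f 0 = 0 := hfun _ (hf 0)
  have hadd : ∀ a b, f (a + b) = f a + f b := by
    intro a b
    exact (huniq (a+b) (f a + f b) (by simpa using Γ.add_mem (hf a) (hf b))).symm
  exact ⟨{ toFun := f, map_zero' := hzero, map_add' := fun a b => hadd a b }, hf⟩

end Aux
section Ext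

variable {p : ℕ}

/-- Key extension lemma: a hom from a subgroup into a "relatively divisible" group
extends to the whole p-group. -/
lemma ext_hom (hp : p.Prime) {H W : Type} [AddCommGroup H] [AddCommGroup W]
    (hH : ∀ x : H, ∃ e : ℕ, p ^ e • x = 0)
    (hdiv : ∀ (g : H) (w : W), (∀ n : ℕ, p ^ n • (p • g) = 0 → p ^ n • w = 0) →
      ∃ w', p • w' = w)
    (A : AddSubgroup H) (ψ : ↥A →+ W) :
    ∃ φ : H →+ W, ∀ a : ↥A, φ ↑a = ψ a := by
  classical
  set Γ₀ : AddSubgroup (H × W) := (A.subtype.prod ψ).range with hΓ₀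
  have hΓ₀mem : ∀ a : ↥A, ((a : H), ψ a) ∈ Γ₀ := fun a => ⟨a, rfl⟩
  set S : Set (AddSubgroup (H × W)) :=
    {Γ | Γ₀ ≤ Γ ∧ ∀ w : W, ((0:H), w) ∈ Γ → w = 0} with hS
  have hΓ₀S : Γ₀ ∈ S := by
    refine ⟨le_rfl, ?_⟩
    rintro w ⟨a, ha⟩
    have ha0 : a = 0 := Subtype.ext (congrArg Prod.fst ha)
    rw [ha0] at ha
    simpa using (congrArg Prod.snd ha).symm
  -- Zorn
  obtain ⟨M, -, hMS, hMmax⟩ :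
      ∃ M, Γ₀ ≤ M ∧ M ∈ S ∧ ∀ Γ ∈ S, M ≤ Γ → Γ ≤ M := by
    have hub : ∀ c ⊆ S, IsChain (· ≤ ·) c → ∀ y ∈ c, ∃ ub ∈ S, ∀ z ∈ c, z ≤ ub := by
      intro c hcS hchain y hy
      refine ⟨sSup c, ?_, fun z hz => le_sSup hz⟩
      have hne : c.Nonempty := ⟨y, hy⟩
      have hdir : DirectedOn (· ≤ ·) c := hchain.directedOn
      constructor
      · exact le_trans (hcS hy).1 (le_sSup hy)
      · intro w hw
        obtain ⟨Γ, hΓc, hwΓ⟩ := (AddSubgroup.mem_sSup_of_directedOn hne hdir).1 hw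
        exact (hcS hΓc).2 w hwΓ
    obtain ⟨M, hle, hmax⟩ := zorn_le_nonempty₀ S hub Γ₀ hΓ₀S
    exact ⟨M, hle, hmax.1, fun Γ hΓ hMΓ => hmax.2 hΓ hMΓ⟩
  -- domain of M
  set D : AddSubgroup H := M.map (AddMonoidHom.fst H W) with hD
  have hmemD : ∀ q : H × W, q ∈ M → q.1 ∈ D := fun q hq => ⟨q, hq, rfl⟩
  -- M is functional
  have hMfun : ∀ w : W, ((0:H), w) ∈ M → w = 0 := hMS.2
  have hMval : ∀ (x : H) (w : W), (x, w) ∈ M → ∀ n : ℕ, p ^ n • x = 0 → p ^ n • w = 0 := by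
    intro x w hxw n hx
    have h1 : ((p ^ n • x : H), (p ^ n • w : W)) ∈ M := by
      have := M.nsmul_mem hxw (p ^ n)
      exact this
    rw [hx] at h1
    exact hMfun _ h1
  -- totality
  have hDtop : D = ⊤ := by
    by_contra hne
    obtain ⟨x, hx⟩ : ∃ x : H, x ∉ D := by
      by_contra hc
      push_neg at hc
      exact hne ((AddSubgroup.eq_top_iff' D).2 hc)
    obtain ⟨e, he⟩ := hH x
    have hQe : p ^ e • x ∈ D := by rw [he]; exact D.zero_mem
    have hex : ∃ j, p ^ j • x ∈ D := ⟨e, hQe⟩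
    set j₀ := Nat.find hex with hj₀
    have hj₀mem : p ^ j₀ • x ∈ D := Nat.find_spec hex
    have hj₀pos : 0 < j₀ := by
      rcases Nat.eq_zero_or_pos j₀ with h0 | h
      · exfalso; apply hx; have := hj₀mem; rw [h0] at this; simpa using this
      · exact h
    set g : H := p ^ (j₀ - 1) • x with hg
    have hgD : g ∉ D := Nat.find_min hex (by omega)
    have hpgD : p • g ∈ D := by
      have hj1 : j₀ - 1 + 1 = j₀ := by omega
      have : p • g = p ^ j₀ • x := by
        rw [hg, ← mul_smul, ← pow_succ', hj1]
      rw [this]; exact hj₀mem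
    obtain ⟨⟨q1, w₀⟩, hqM, hq1⟩ := hpgD
    simp only [AddMonoidHom.coe_fst] at hq1
    subst hq1
    have hqpair : ((p • g : H), w₀) ∈ M := hqM
    obtain ⟨w', hw'⟩ := hdiv g w₀ (fun n hn => hMval _ _ hqpair n hn)
    set M' := M ⊔ AddSubgroup.zmultiples ((g, w') : H × W) with hM'
    have hgM' : ((g, w') : H × W) ∈ M' :=
      AddSubgroup.mem_sup_right (AddSubgroup.mem_zmultiples _)
    have hM'S : M' ∈ S := by
      constructor
      · exact le_trans hMS.1 le_sup_left
      · intro w hw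
        obtain ⟨q', hq'M, r, hr, hqr⟩ := AddSubgroup.mem_sup.1 hw
        obtain ⟨t, ht⟩ := AddSubgroup.mem_zmultiples_iff.1 hr
        -- q' + t • (g, w') = (0, w)
        rw [← ht] at hqr
        have hq'1 : q'.1 + t • g = 0 := by
          have := congrArg Prod.fst hqr
          simpa using this
        have hq'2 : q'.2 + t • w' = w := by
          have := congrArg Prod.snd hqr
          simpa using this
        have htg : t • g ∈ D := by
          have : t • g = -q'.1 := by linear_combination (norm := abel) hq'1
          rw [this]
          exact D.neg_mem (hmemD _ hq'M)
        have hpt : (p:ℤ) ∣ t := by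
          by_contra hndvd
          apply hgD
          obtain ⟨e', he'⟩ := hH g
          obtain ⟨t', hd⟩ := exists_int_inv hp hndvd e'
          have : g = t' • (t • g) := by
            rw [← mul_smul]
            have h2 : (t' * t - 1) • g = 0 :=
              zpow_smul_eq_zero he' _ (by
                have : t' * t - 1 = t * t' - 1 := by ring
                rw [this]; exact hd)
            have h3 := sub_smul (t' * t) 1 g
            rw [h2, one_smul] at h3
            exact (sub_eq_zero.mp h3.symm).symm
          rw [this]
          exact D.zsmul_mem htg t'
        obtain ⟨s, rfl⟩ := hpt
        -- consider q' + s • (p•g, w₀) ∈ M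
        have hkey : (q'.1 + s • ((p:ℤ) • g), q'.2 + s • w₀) ∈ M := by
          have h4 : (s • (((p:ℤ) • g : H), w₀)) ∈ M := by
            apply M.zsmul_mem
            have : (((p:ℤ) • g : H), w₀) = ((p • g : H), w₀) := by
              rw [natCast_zsmul]
            rw [this]; exact hqpair
          have := M.add_mem hq'M h4
          exact this
        have h5 : q'.1 + s • ((p:ℤ) • g) = 0 := by
          rw [← hq'1, ← mul_smul, mul_comm]
        rw [h5] at hkey
        have h6 : q'.2 + s • w₀ = 0 := hMfun _ hkey
        have h7 : ((p:ℤ) * s) • w' = s • w₀ := by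
          rw [mul_comm, mul_smul, ← hw', natCast_zsmul]
        rw [← hq'2, h7, h6]
    -- contradiction with maximality
    have : ((g, w') : H × W) ∈ M := hMmax M' hM'S le_sup_left hgM'
    exact hgD (hmemD _ this)
  -- extract hom
  have htot : ∀ x : H, ∃ w, (x, w) ∈ M := by
    intro x
    have hxD : x ∈ D := hDtop ▸ AddSubgroup.mem_top x
    obtain ⟨⟨q1, q2⟩, hq, hq1⟩ := hxD
    simp only [AddMonoidHom.coe_fst] at hq1
    subst hq1
    exact ⟨q2, hq⟩
  obtain ⟨φ, hφ⟩ := graph_toHom M htot hMfun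
  refine ⟨φ, fun a => ?_⟩
  have h1 : ((a : H), ψ a) ∈ M := hMS.1 (hΓ₀mem a)
  have h2 : ((a : H), φ a) ∈ M := hφ a
  have h3 : ((0:H), φ a - ψ a) ∈ M := by
    have := M.sub_mem h2 h1
    simpa using this
  have := hMfun _ h3
  exact sub_eq_zero.mp this

end Ext
section Tor

variable (p : ℕ)

/-- The `p`-torsion subgroup. -/
def pTor (G : Type) [AddCommGroup G] : AddSubgroup G where
  carrier := {x | ∃ n : ℕ, p ^ n • x = 0}
  zero_mem' := ⟨0, smul_zero _⟩
  add_mem' := by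
    rintro a b ⟨n, hn⟩ ⟨m, hm⟩
    refine ⟨n + m, ?_⟩
    rw [smul_add]
    have h1 : p ^ (n + m) • a = 0 := by
      rw [pow_add, mul_comm, mul_smul, hn, smul_zero]
    have h2 : p ^ (n + m) • b = 0 := by
      rw [pow_add, mul_smul, hm, smul_zero]
    rw [h1, h2, add_zero]
  neg_mem' := by
    rintro a ⟨n, hn⟩
    exact ⟨n, by rw [smul_neg, hn, neg_zero]⟩

/-- The socle: elements killed by `p`. -/
def socle (G : Type) [AddCommGroup G] : AddSubgroup G where
  carrier := {x | p • x = 0}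
  zero_mem' := smul_zero _
  add_mem' := by
    rintro a b ha hb
    show p • (a + b) = 0
    rw [smul_add, ha, hb, add_zero]
  neg_mem' := by
    rintro a ha
    show p • (-a) = 0
    rw [smul_neg, ha, neg_zero]

end Tor

section Prufer

variable {p : ℕ}

/-- `ℚ/ℤ`. -/
abbrev QZ : Type := ℚ ⧸ AddSubgroup.zmultiples (1 : ℚ)

/-- Quasi-cyclic (Prüfer) p-group as the p-torsion of ℚ/ℤ. -/
abbrev Pruefer (p : ℕ) : Type := ↥(pTor p QZ)

lemma Pruefer.divisible (hp : p.Prime) (a : Pruefer p) : ∃ b : Pruefer p, p • b = a := by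
  obtain ⟨q, hq⟩ := QuotientAddGroup.mk_surjective (a : QZ)
  obtain ⟨n, hn⟩ := a.2
  have hp0 : (p : ℚ) ≠ 0 := Nat.cast_ne_zero.2 hp.ne_zero
  have hb0 : p • (QuotientAddGroup.mk ((p:ℚ)⁻¹ * q) : QZ) = (a : QZ) := by
    rw [← QuotientAddGroup.mk_nsmul, ← hq]
    congr 1
    rw [nsmul_eq_mul]
    field_simp
  have hbtor : (QuotientAddGroup.mk ((p:ℚ)⁻¹ * q) : QZ) ∈ pTor p QZ := by
    refine ⟨n + 1, ?_⟩
    rw [pow_succ, mul_smul, hb0, hn]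
  refine ⟨⟨_, hbtor⟩, ?_⟩
  ext
  push_cast
  exact hb0

/-- Element of order `p` in the Prüfer group. -/
noncomputable def Pruefer.eps (p : ℕ) [NeZero p] : Pruefer p :=
  ⟨QuotientAddGroup.mk ((p:ℚ)⁻¹), ⟨1, by
    rw [pow_one, ← QuotientAddGroup.mk_nsmul]
    rw [QuotientAddGroup.eq_zero_iff]
    have hp0 : (p : ℚ) ≠ 0 := Nat.cast_ne_zero.2 (NeZero.ne p)
    have : p • (p:ℚ)⁻¹ = 1 := by rw [nsmul_eq_mul]; field_simp
    rw [this]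
    exact AddSubgroup.mem_zmultiples _⟩⟩

lemma Pruefer.eps_smul (p : ℕ) [NeZero p] : p • Pruefer.eps p = 0 := by
  ext
  push_cast
  have heq : ((Pruefer.eps p : Pruefer p) : QZ) = QuotientAddGroup.mk ((p:ℚ)⁻¹) := rfl
  rw [heq, ← QuotientAddGroup.mk_nsmul]
  show (QuotientAddGroup.mk (p • (p:ℚ)⁻¹) : QZ) = 0
  rw [QuotientAddGroup.eq_zero_iff]
  have hp0 : (p : ℚ) ≠ 0 := Nat.cast_ne_zero.2 (NeZero.ne p)
  have : p • (p:ℚ)⁻¹ = 1 := by rw [nsmul_eq_mul]; field_simp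
  rw [this]
  exact AddSubgroup.mem_zmultiples _

lemma Pruefer.eps_ne_zero (hp : p.Prime) : haveI : NeZero p := ⟨hp.ne_zero⟩
    Pruefer.eps p ≠ 0 := by
  haveI : NeZero p := ⟨hp.ne_zero⟩
  intro hcontra
  have h1 : (QuotientAddGroup.mk ((p:ℚ)⁻¹) : QZ) = 0 := by
    have := congrArg (Subtype.val) hcontra
    exact this
  rw [QuotientAddGroup.eq_zero_iff] at h1
  obtain ⟨k, hk⟩ := AddSubgroup.mem_zmultiples_iff.1 h1
  have hk1 : (k : ℚ) = (p:ℚ)⁻¹ := by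
    rw [← hk]
    rw [zsmul_eq_mul, mul_one]
  have hp0 : (p : ℚ) ≠ 0 := Nat.cast_ne_zero.2 hp.ne_zero
  have hk2 : ((k * p : ℤ) : ℚ) = 1 := by
    push_cast
    rw [hk1]
    field_simp
  have hk3 : (k * p : ℤ) = 1 := by exact_mod_cast hk2
  have : (p : ℤ) ∣ 1 := ⟨k, by rw [← hk3]; ring⟩
  have := Int.le_of_dvd one_pos this
  have := hp.two_le
  omega

end Prufer
section Div

variable {p : ℕ}

lemma finsupp_pdiv {I A : Type} [AddCommGroup A] {p : ℕ} (v : I →₀ A)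
    (hv : ∀ i, ∃ b : A, p • b = v i) : ∃ w : I →₀ A, p • w = v := by
  classical
  refine ⟨v.mapRange (fun a => if ha : a = 0 then 0 else
    (if h : ∃ b : A, p • b = a then Classical.choose h else 0)) (by simp), ?_⟩
  ext i
  rw [Finsupp.smul_apply, Finsupp.mapRange_apply]
  by_cases hzero : v i = 0
  · rw [hzero]; simp
  · rw [dif_neg hzero, dif_pos (hv i)]
    exact Classical.choose_spec (hv i)

lemma zmod_relative_div (hp : p.Prime) {k : ℕ} (hk : 1 ≤ k) (a : ZMod (p ^ k))
    (ha : p ^ (k - 1) • a = 0) : ∃ b : ZMod (p ^ k), p • b = a := by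
  haveI : NeZero (p ^ k) := ⟨pow_ne_zero k hp.ne_zero⟩
  have hval : ((a.val : ℕ) : ZMod (p ^ k)) = a := ZMod.natCast_rightInverse a
  have h1 : ((p ^ (k - 1) * a.val : ℕ) : ZMod (p ^ k)) = 0 := by
    push_cast
    rw [hval] at *
    calc ((p:ZMod (p^k)) ^ (k-1)) * a = p ^ (k - 1) • a := by
          rw [nsmul_eq_mul]; push_cast; ring
      _ = 0 := ha
  rw [ZMod.natCast_eq_zero_iff] at h1
  have h2 : p ^ k ∣ p ^ (k - 1) * a.val := h1
  have h3 : p ∣ a.val := by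
    have hkk : p ^ k = p ^ (k - 1) * p := by
      rw [← pow_succ]
      congr 1
      omega
    obtain ⟨c, hc⟩ := h2
    have hc' : p ^ (k - 1) * a.val = p ^ (k - 1) * (p * c) := by
      rw [hc, hkk]; ring
    exact ⟨c, Nat.eq_of_mul_eq_mul_left (pow_pos hp.pos _) hc'⟩
  obtain ⟨c, hc⟩ := h3
  refine ⟨(c : ZMod (p ^ k)), ?_⟩
  rw [nsmul_eq_mul]
  calc ((p :ℕ) : ZMod (p^k)) * (c : ZMod (p^k)) = ((p * c : ℕ) : ZMod (p^k)) := by push_cast; ring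
    _ = ((a.val : ℕ) : ZMod (p^k)) := by rw [← hc]
    _ = a := hval

lemma exists_zmodp_hom {W₀ : Type} [AddCommGroup W₀] (hp : p.Prime) (w₀ : W₀)
    (h1 : p • w₀ = 0) (h2 : w₀ ≠ 0) : ∃ θ : ZMod p →+ W₀, Function.Injective θ := by
  have hmem : ((zmultiplesHom W₀) w₀) ((p:ℕ):ℤ) = 0 := by
    show ((p:ℕ):ℤ) • w₀ = 0
    rw [natCast_zsmul]; exact h1
  refine ⟨ZMod.lift p ⟨(zmultiplesHom W₀) w₀, hmem⟩, ?_⟩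
  set θ := ZMod.lift p ⟨(zmultiplesHom W₀) w₀, hmem⟩ with hθ
  rw [injective_iff_map_eq_zero]
  intro c hc
  by_contra hcne
  haveI : NeZero p := ⟨hp.ne_zero⟩
  have hval : ((c.val : ℕ) : ZMod p) = c := ZMod.natCast_rightInverse c
  have hcast : (((c.val : ℕ) : ℤ) : ZMod p) = c := by push_cast; exact hval
  have hθc : θ c = ((c.val : ℕ) : ℤ) • w₀ := by
    conv_lhs => rw [← hcast]
    rw [hθ, ZMod.lift_coe]
    rfl
  have hvne : ¬ (p:ℤ) ∣ (c.val : ℤ) := by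
    rw [Int.natCast_dvd_natCast]
    intro hdvd
    apply hcne
    have hlt : c.val < p := ZMod.val_lt c
    have : c.val = 0 := Nat.eq_zero_of_dvd_of_lt hdvd hlt
    rw [← hval, this, Nat.cast_zero]
  obtain ⟨t', hd⟩ := exists_int_inv hp hvne 1
  rw [pow_one] at hd
  have hzero : (((c.val : ℕ) : ℤ) * t' - 1) • w₀ = 0 := by
    apply zpow_smul_eq_zero (e := 1) (by rw [pow_one]; exact h1)
    rw [pow_one]; exact hd
  have h3 := sub_smul (((c.val : ℕ) : ℤ) * t') 1 w₀
  rw [hzero, one_smul] at h3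
  have h4 : (((c.val : ℕ) : ℤ) * t') • w₀ = w₀ := sub_eq_zero.mp h3.symm
  apply h2
  rw [← h4, mul_comm, mul_smul, ← hθc, hc, smul_zero]

end Div
section Socle

variable {p : ℕ}

lemma socle_nsmul {G : Type} [AddCommGroup G] (x : ↥(socle p G)) : p • x = 0 := by
  ext
  push_cast
  exact x.2

lemma exists_socle_embedding {G W₀ I : Type} [AddCommGroup G] [AddCommGroup W₀]
    (hp : p.Prime) (w₀ : W₀) (h1 : p • w₀ = 0) (h2 : w₀ ≠ 0)
    (hcard : Cardinal.mk G ≤ Cardinal.mk I) :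
    ∃ ψ : ↥(socle p G) →+ (I →₀ W₀), Function.Injective ψ := by
  classical
  haveI : Fact p.Prime := ⟨hp⟩
  letI : Module (ZMod p) ↥(socle p G) := AddCommGroup.zmodModule socle_nsmul
  obtain ⟨θ, hθ⟩ := exists_zmodp_hom hp w₀ h1 h2
  set ι := Module.Basis.ofVectorSpaceIndex (ZMod p) ↥(socle p G) with hι
  set B : Module.Basis ι (ZMod p) ↥(socle p G) := Module.Basis.ofVectorSpace (ZMod p) ↥(socle p G) with hB
  have hcard2 : Cardinal.mk ↥ι ≤ Cardinal.mk I := by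
    refine le_trans (Cardinal.mk_subtype_le _) (le_trans ?_ hcard)
    exact Cardinal.mk_subtype_le _
  obtain ⟨u⟩ : Nonempty (↥ι ↪ I) := Cardinal.le_def _ _ |>.1 hcard2
  set m1 : ↥(socle p G) →+ (↥ι →₀ ZMod p) := B.repr.toLinearMap.toAddMonoidHom with hm1
  set m2 : (↥ι →₀ ZMod p) →+ (I →₀ ZMod p) := Finsupp.mapDomain.addMonoidHom u with hm2
  set m3 : (I →₀ ZMod p) →+ (I →₀ W₀) := Finsupp.mapRange.addMonoidHom θ with hm3
  refine ⟨m3.comp (m2.comp m1), ?_⟩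
  have e1 : Function.Injective ⇑m1 := B.repr.injective
  have e2 : Function.Injective ⇑m2 := by
    intro x y hxy
    exact Finsupp.mapDomain_injective u.injective hxy
  have e3 : Function.Injective ⇑m3 := by
    intro x y hxy
    exact Finsupp.mapRange_injective ⇑θ (map_zero θ) hθ hxy
  intro a b hab
  apply e1
  apply e2
  apply e3
  exact hab

lemma exists_injective_hom {G W₀ I : Type} [AddCommGroup G] [AddCommGroup W₀] (hp : p.Prime)
    (hG : ∀ g : G, ∃ e : ℕ, p ^ e • g = 0)
    (w₀ : W₀) (h1 : p • w₀ = 0) (h2 : w₀ ≠ 0)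
    (hdivW : ∀ (g : G) (w : I →₀ W₀), (∀ n : ℕ, p ^ n • (p • g) = 0 → p ^ n • w = 0) →
        ∃ w', p • w' = w)
    (hcard : Cardinal.mk G ≤ Cardinal.mk I) :
    ∃ φ : G →+ (I →₀ W₀), Function.Injective φ := by
  classical
  obtain ⟨ψ, hψ⟩ := exists_socle_embedding hp w₀ h1 h2 hcard
  obtain ⟨φ, hφ⟩ := ext_hom hp hG hdivW (socle p G) ψ
  refine ⟨φ, ?_⟩
  rw [injective_iff_map_eq_zero]
  intro g hg
  by_contra hne
  obtain ⟨e0, he0⟩ := hG g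
  have hex : ∃ e, p ^ e • g = 0 := ⟨e0, he0⟩
  have he : p ^ (Nat.find hex) • g = 0 := Nat.find_spec hex
  set e := Nat.find hex with heq
  have hepos : 0 < e := by
    rcases Nat.eq_zero_or_pos e with h0 | h
    · exfalso; apply hne; rw [h0, pow_zero, one_smul] at he; exact he
    · exact h
  set x := p ^ (e - 1) • g with hx
  have hxne : x ≠ 0 := Nat.find_min hex (by omega : e - 1 < Nat.find hex)
  have hxs : x ∈ socle p G := by
    show p • x = 0
    rw [hx, ← mul_smul, ← pow_succ']
    have h5 : e - 1 + 1 = e := by omega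
    rw [h5]
    exact he
  have hφx : φ x = 0 := by
    rw [hx, map_nsmul, hg, smul_zero]
  have h6 : ψ ⟨x, hxs⟩ = ψ 0 := by
    rw [map_zero, ← hφ ⟨x, hxs⟩]
    exact hφx
  have h7 := hψ h6
  exact hxne (by simpa using congrArg Subtype.val h7)

end Socle
section Assembly

variable {p : ℕ}

/-- `n • ·` as an `AddMonoidHom`. -/
def nsmulHom (n : ℕ) (G : Type) [AddCommGroup G] : G →+ G where
  toFun := fun g => n • g
  map_zero' := smul_zero n
  map_add' := fun a b => smul_add n a b

lemma finsupp_apply_nsmul {I A : Type} [AddCommGroup A] (n : ℕ) (x : I →₀ A) (i : I) :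
    (n • x) i = n • (x i) :=
  map_nsmul (Finsupp.applyAddHom i) n x

lemma zmod_pk_smul (k : ℕ) (a : ZMod (p ^ k)) : p ^ k • a = 0 := by
  rw [nsmul_eq_mul, ZMod.natCast_self, zero_mul]

lemma bounded_L {I : Type} (k : ℕ) (x : I →₀ ZMod (p ^ k)) : p ^ k • x = 0 := by
  ext i
  rw [finsupp_apply_nsmul, zmod_pk_smul]
  rfl

lemma W_torsion {I : Type} (w : I →₀ Pruefer p) : ∃ m : ℕ, p ^ m • w = 0 := by
  classical
  induction w using Finsupp.induction_linear with
  | zero => exact ⟨0, smul_zero _⟩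
  | add f g hf hg =>
    obtain ⟨n, hn⟩ := hf
    obtain ⟨m, hm⟩ := hg
    refine ⟨n + m, ?_⟩
    rw [smul_add]
    have h1 : p ^ (n + m) • f = 0 := by rw [pow_add, mul_comm, mul_smul, hn, smul_zero]
    have h2 : p ^ (n + m) • g = 0 := by rw [pow_add, mul_smul, hm, smul_zero]
    rw [h1, h2, add_zero]
  | single a b =>
    obtain ⟨n, hn⟩ := b.2
    refine ⟨n, ?_⟩
    have hb : p ^ n • b = 0 := by
      ext
      push_cast
      exact hn
    ext j
    rw [finsupp_apply_nsmul, Finsupp.single_apply]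
    by_cases hj : a = j
    · rw [if_pos hj, hb]; rfl
    · rw [if_neg hj, smul_zero]; rfl

/-- The universality part. -/
lemma exists_pure_embedding (hp : p.Prime) {I : Type} [Infinite I]
    (G : Type) [AddCommGroup G] (hG : IsAbelianPGroup p G)
    (hcard : Cardinal.mk G ≤ Cardinal.mk I) :
    ∃ f : G →+ (↥(pTor p ((k : ℕ) → (I →₀ ZMod (p ^ k)))) × (I →₀ Pruefer p)),
      IsPureEmbedding f := by
  classical
  haveI : NeZero p := ⟨hp.ne_zero⟩
  set V : Type := (k : ℕ) → (I →₀ ZMod (p ^ k)) with hV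
  set W : Type := I →₀ Pruefer p with hW
  -- the divisible side
  obtain ⟨φW, hφW⟩ : ∃ φ : G →+ W, Function.Injective φ := by
    apply exists_injective_hom hp hG (Pruefer.eps p) (Pruefer.eps_smul p)
      (Pruefer.eps_ne_zero hp) ?_ hcard
    intro g w _
    apply finsupp_pdiv
    intro i
    exact Pruefer.divisible hp (w i)
  -- the level maps
  have hek : ∀ k : ℕ, ∃ e : (G ⧸ (nsmulHom (p ^ k) G).range) →+ (I →₀ ZMod (p ^ k)),
      (1 ≤ k → Function.Injective e) := by
    intro k
    rcases Nat.eq_zero_or_pos k with hk0 | hk1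
    · exact ⟨0, by omega⟩
    · -- quotient is p^k-bounded
      have hbdd : ∀ x : G ⧸ (nsmulHom (p ^ k) G).range, p ^ k • x = 0 := by
        intro x
        induction x using QuotientAddGroup.induction_on with
        | H g =>
          rw [← QuotientAddGroup.mk_nsmul]
          rw [QuotientAddGroup.eq_zero_iff]
          exact ⟨g, rfl⟩
      have hqcard : Cardinal.mk (G ⧸ (nsmulHom (p ^ k) G).range) ≤ Cardinal.mk I :=
        le_trans (Cardinal.mk_le_of_surjective QuotientAddGroup.mk_surjective) hcard
      have hw1 : p • ((p ^ (k - 1) : ℕ) : ZMod (p ^ k)) = 0 := by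
        rw [nsmul_eq_mul]
        have : ((p:ℕ) : ZMod (p^k)) * ((p ^ (k - 1) : ℕ) : ZMod (p ^ k))
            = ((p ^ k : ℕ) : ZMod (p ^ k)) := by
          push_cast
          rw [← pow_succ']
          congr 1
          omega
        rw [this, ZMod.natCast_self]
      have hw2 : ((p ^ (k - 1) : ℕ) : ZMod (p ^ k)) ≠ 0 := by
        rw [Ne, ZMod.natCast_eq_zero_iff]
        intro hdvd
        have hle := Nat.le_of_dvd (pow_pos hp.pos _) hdvd
        have hlt : p ^ (k - 1) < p ^ k := Nat.pow_lt_pow_right hp.one_lt (by omega)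
        omega
      have hdivL : ∀ (g : G ⧸ (nsmulHom (p ^ k) G).range) (w : I →₀ ZMod (p ^ k)),
          (∀ n : ℕ, p ^ n • (p • g) = 0 → p ^ n • w = 0) → ∃ w', p • w' = w := by
        intro g w hcond
        have hg1 : p ^ (k - 1) • (p • g) = 0 := by
          rw [← mul_smul, ← pow_succ]
          have : k - 1 + 1 = k := by omega
          rw [this]
          exact hbdd g
        have hw : p ^ (k - 1) • w = 0 := hcond (k - 1) hg1
        apply finsupp_pdiv
        intro i
        apply zmod_relative_div hp hk1
        rw [← finsupp_apply_nsmul, hw]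
        rfl
      obtain ⟨e, he⟩ := exists_injective_hom hp (fun x => ⟨k, hbdd x⟩)
        ((p ^ (k - 1) : ℕ) : ZMod (p ^ k)) hw1 hw2 hdivL hqcard
      exact ⟨e, fun _ => he⟩
  choose ek hek using hek
  -- assemble T-component
  set vT : G →+ V := {
    toFun := fun g k => ek k (QuotientAddGroup.mk g)
    map_zero' := by
      funext k
      show ek k (QuotientAddGroup.mk 0) = 0
      rw [QuotientAddGroup.mk_zero, map_zero]
    map_add' := by
      intro a b
      funext k
      show ek k (QuotientAddGroup.mk (a + b))
          = ek k (QuotientAddGroup.mk a) + ek k (QuotientAddGroup.mk b)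
      rw [QuotientAddGroup.mk_add, map_add] } with hvT
  have hvTmem : ∀ g : G, vT g ∈ pTor p V := by
    intro g
    obtain ⟨e, he⟩ := hG g
    refine ⟨e, ?_⟩
    funext k
    have h1 : (p ^ e • vT g) k = p ^ e • (vT g k) := rfl
    rw [h1]
    have h2 : p ^ e • (vT g k) = ek k (QuotientAddGroup.mk (p ^ e • g)) := by
      rw [QuotientAddGroup.mk_nsmul, map_nsmul]
      rfl
    rw [h2, he, QuotientAddGroup.mk_zero, map_zero]
    rfl
  set fT : G →+ ↥(pTor p V) := vT.codRestrict (pTor p V) hvTmem with hfT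
  refine ⟨fT.prod φW, ⟨?_, ?_⟩⟩
  · -- injectivity
    rw [injective_iff_map_eq_zero]
    intro g hg
    apply hφW
    rw [map_zero]
    have := congrArg Prod.snd hg
    simpa [AddMonoidHom.prod_apply] using this
  · -- purity
    intro n g hex
    obtain ⟨u, hu⟩ := hex
    rcases Nat.eq_zero_or_pos n with hn0 | hnpos
    · refine ⟨0, ?_⟩
      rw [hn0, zero_smul] at hu ⊢
      have hg0 : g = 0 := by
        apply hφW
        rw [map_zero]
        have := congrArg Prod.snd hu.symm
        simpa [AddMonoidHom.prod_apply] using this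
      exact hg0.symm
    · set k := n.factorization p with hk
      set m := n / p ^ k with hm
      have hnfact : p ^ k * m = n := Nat.ordProj_mul_ordCompl_eq_self n p
      have hmdvd : ¬ p ∣ m := Nat.not_dvd_ordCompl hp (by omega)
      have hTcomp : n • u.1 = fT g := by
        have := congrArg Prod.fst hu
        simpa [AddMonoidHom.prod_apply] using this
      have h3 : ((n • u.1 : ↥(pTor p V)) : V) = n • (u.1 : V) := by
        push_cast
        ring_nf
      have hval : n • ((u.1 : V) k) = ek k (QuotientAddGroup.mk g) := by
        have h5 := congrArg (fun t : ↥(pTor p V) => (t : V) k) hTcomp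
        rw [h3] at h5
        calc n • ((u.1 : V) k) = (n • (u.1 : V)) k := rfl
          _ = ((fT g : ↥(pTor p V)) : V) k := h5
          _ = ek k (QuotientAddGroup.mk g) := rfl
      have hek0 : ek k (QuotientAddGroup.mk g) = 0 := by
        rw [← hval, ← hnfact, mul_smul]
        exact bounded_L k _
      have hgdvd : ∃ g₁ : G, p ^ k • g₁ = g := by
        rcases Nat.eq_zero_or_pos k with hk0 | hk1
        · exact ⟨g, by rw [hk0, pow_zero, one_smul]⟩
        · have hinj := hek k hk1
          have hq0 : (QuotientAddGroup.mk g : G ⧸ (nsmulHom (p ^ k) G).range) = 0 := by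
            apply hinj
            rw [hek0, map_zero]
          rw [QuotientAddGroup.eq_zero_iff] at hq0
          obtain ⟨g₁, hg₁⟩ := hq0
          exact ⟨g₁, hg₁⟩
      obtain ⟨g₁, hg₁⟩ := hgdvd
      obtain ⟨e1, he1⟩ := hG g₁
      have hmz : ¬ ((p:ℤ)) ∣ ((m : ℕ) : ℤ) := by
        rw [Int.natCast_dvd_natCast]
        exact hmdvd
      obtain ⟨y, hy⟩ := coprime_zsmul_surj hp hmz he1
      have hym : m • y = g₁ := by
        rw [← natCast_zsmul]
        exact hy
      refine ⟨y, ?_⟩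
      rw [← hnfact, mul_smul, hym, hg₁]

end Assembly

theorem universal_p_group_of_pow_aleph0_eq (p : ℕ) (hp : p.Prime) (lam : Cardinal)
    (hlam : Cardinal.aleph0 ≤ lam) (h : lam ^ Cardinal.aleph0 = lam) :
    HasUniversalPGroup p lam := by
  classical
  haveI : NeZero p := ⟨hp.ne_zero⟩
  obtain ⟨I, hmkI⟩ : ∃ I : Type, Cardinal.mk I = lam := ⟨lam.out, Cardinal.mk_out lam⟩
  haveI : Infinite I := Cardinal.infinite_iff.2 (by rw [hmkI]; exact hlam)
  set V : Type := (k : ℕ) → (I →₀ ZMod (p ^ k)) with hV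
  set T : AddSubgroup V := pTor p V with hT
  set W : Type := I →₀ Pruefer p with hW
  refine ⟨↥T × W, inferInstance, ?_, ?_, ?_⟩
  · -- p-group
    intro g
    obtain ⟨n, hn⟩ := g.1.2
    obtain ⟨m, hm⟩ := W_torsion (p := p) g.2
    refine ⟨n + m, ?_⟩
    have h1 : p ^ (n + m) • g.1 = 0 := by
      ext
      push_cast
      rw [pow_add, mul_comm, mul_smul, hn, smul_zero]
    have h2 : p ^ (n + m) • g.2 = 0 := by
      rw [pow_add, mul_smul, hm, smul_zero]
    rw [Prod.ext_iff]
    exact ⟨h1, h2⟩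
  · -- cardinality
    have hL : ∀ k : ℕ, Cardinal.mk (I →₀ ZMod (p ^ k)) ≤ lam := by
      intro k
      rcases Nat.eq_zero_or_pos k with hk0 | hk1
      · subst hk0
        haveI : Subsingleton (ZMod (p ^ 0)) := inferInstanceAs (Subsingleton (ZMod 1))
        haveI : Subsingleton (I →₀ ZMod (p ^ 0)) :=
          ⟨fun f g => Finsupp.ext fun i => Subsingleton.elim _ _⟩
        have h1 : Cardinal.mk (I →₀ ZMod (p ^ 0)) ≤ 1 :=
          Cardinal.le_one_iff_subsingleton.2 inferInstance
        exact le_trans h1 (le_trans Cardinal.one_le_aleph0 hlam)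
      · haveI : Fact (1 < p ^ k) := ⟨Nat.one_lt_pow (by omega) hp.one_lt⟩
        rw [Cardinal.mk_finsupp_of_infinite I (ZMod (p ^ k))]
        apply max_le (le_of_eq hmkI)
        exact le_trans (Cardinal.mk_le_aleph0) hlam
    have hTle : Cardinal.mk ↥T ≤ lam := by
      calc Cardinal.mk ↥T ≤ Cardinal.mk V := Cardinal.mk_subtype_le _
        _ = Cardinal.prod (fun k : ℕ => Cardinal.mk (I →₀ ZMod (p ^ k))) := Cardinal.mk_pi _
        _ ≤ Cardinal.prod (fun _ : ℕ => lam) := Cardinal.prod_le_prod _ _ hL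
        _ = lam ^ Cardinal.aleph0 := by
            rw [Cardinal.prod_const', Cardinal.mk_denumerable]
        _ = lam := h
    have hTge : lam ≤ Cardinal.mk ↥T := by
      haveI : Fact (1 < p ^ 1) := ⟨Nat.one_lt_pow (by omega) hp.one_lt⟩
      have hjtor : ∀ i : I, Function.update (0 : V) 1 (Finsupp.single i 1) ∈ pTor p V := by
        intro i
        refine ⟨1, ?_⟩
        funext k
        have hcomp : (p ^ 1 • Function.update (0 : V) 1 (Finsupp.single i 1)) k
            = p ^ 1 • (Function.update (0 : V) 1 (Finsupp.single i 1) k) := rfl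
        rw [hcomp]
        by_cases hk : k = 1
        · subst hk
          rw [Function.update_self]
          rw [bounded_L 1 (Finsupp.single i 1)]
          rfl
        · rw [Function.update_of_ne hk]
          exact smul_zero _
      set j : I → ↥T := fun i => ⟨Function.update (0 : V) 1 (Finsupp.single i 1), hjtor i⟩
        with hj
      have hjinj : Function.Injective j := by
        intro i i' hii
        have h5 := congrArg (fun t : ↥T => (t : V) 1) hii
        simp only [hj, Function.update_self] at h5
        exact Finsupp.single_left_injective one_ne_zero h5
      rw [← hmkI]
      exact Cardinal.mk_le_of_injective hjinj
    have hWle : Cardinal.mk W ≤ lam := by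
      haveI : Nontrivial (Pruefer p) := ⟨⟨Pruefer.eps p, 0, Pruefer.eps_ne_zero hp⟩⟩
      rw [hW, Cardinal.mk_finsupp_of_infinite I (Pruefer p)]
      apply max_le (le_of_eq hmkI)
      refine le_trans ?_ hlam
      calc Cardinal.mk (Pruefer p) ≤ Cardinal.mk QZ := Cardinal.mk_subtype_le _
        _ ≤ Cardinal.mk ℚ := Cardinal.mk_quotient_le
        _ = Cardinal.aleph0 := Cardinal.mkRat
    have hprod : Cardinal.mk (↥T × W) = Cardinal.mk ↥T * Cardinal.mk W := by
      rw [Cardinal.mk_prod, Cardinal.lift_id, Cardinal.lift_id]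
    rw [hprod, le_antisymm hTle hTge]
    haveI : Nonempty W := ⟨0⟩
    exact Cardinal.mul_eq_left hlam hWle (Cardinal.mk_ne_zero W)
  · -- universality
    intro G instG hG hcardG
    exact exists_pure_embedding hp G hG (by rw [hmkI]; exact hcardG)
end

section
/- Let p be a prime number. The class of abelian p-groups with pure embeddings has the amalgamation property: if M, N₁, N₂ are abelian p-groups with pure embeddings f₁ : M → N₁ and f₂ : M → N₂, then there exist an abelian p-group N and pure embeddings g₁ : N₁ → N and g₂ : N₂ → N such that g₁ ∘ f₁ = g₂ ∘ f₂. -/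
theorem p_groups_amalgamation (p : ℕ) (hp : p.Prime)
    (M N₁ N₂ : Type) [AddCommGroup M] [AddCommGroup N₁] [AddCommGroup N₂]
    (hM : IsAbelianPGroup p M) (hN₁ : IsAbelianPGroup p N₁) (hN₂ : IsAbelianPGroup p N₂)
    (f₁ : M →+ N₁) (f₂ : M →+ N₂) (hf₁ : IsPureEmbedding f₁) (hf₂ : IsPureEmbedding f₂) :
    ∃ (N : Type) (_ : AddCommGroup N), IsAbelianPGroup p N ∧
      ∃ (g₁ : N₁ →+ N) (g₂ : N₂ →+ N), IsPureEmbedding g₁ ∧ IsPureEmbedding g₂ ∧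
        g₁.comp f₁ = g₂.comp f₂ := by
  set K : AddSubgroup (N₁ × N₂) := (f₁.prod (-f₂)).range with hK
  have hKmem : ∀ z : N₁ × N₂, z ∈ K ↔ ∃ m : M, f₁ m = z.1 ∧ -f₂ m = z.2 := by
    intro z
    constructor
    · rintro ⟨m, rfl⟩; exact ⟨m, rfl, rfl⟩
    · rintro ⟨m, h1, h2⟩; exact ⟨m, Prod.ext h1 h2⟩
  refine ⟨(N₁ × N₂) ⧸ K, inferInstance, ?_,
    (QuotientAddGroup.mk' K).comp (AddMonoidHom.inl N₁ N₂),
    (QuotientAddGroup.mk' K).comp (AddMonoidHom.inr N₁ N₂), ?_, ?_, ?_⟩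
  · -- p-group
    intro g
    obtain ⟨⟨x, y⟩, rfl⟩ := QuotientAddGroup.mk'_surjective K g
    obtain ⟨n, hn⟩ := hN₁ x
    obtain ⟨m, hm⟩ := hN₂ y
    refine ⟨n + m, ?_⟩
    rw [← map_nsmul]
    have : (p ^ (n + m)) • (x, y) = (0 : N₁ × N₂) := by
      have hx : p ^ (n + m) • x = 0 := by
        rw [pow_add, mul_comm, mul_smul, hn, smul_zero]
      have hy : p ^ (n + m) • y = 0 := by
        rw [pow_add, mul_smul, hm, smul_zero]
      exact Prod.ext hx hy
    rw [Prod.smul_mk] at this ⊢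
    rw [this, map_zero]
  · -- g₁ pure embedding
    constructor
    · rw [injective_iff_map_eq_zero]
      intro x hx
      have : ((x, 0) : N₁ × N₂) ∈ K := (QuotientAddGroup.eq_zero_iff _).mp hx
      obtain ⟨m, h1, h2⟩ := (hKmem _).mp this
      have hm0 : m = 0 := hf₂.1 (by simpa using h2.symm)
      rw [hm0, map_zero] at h1
      exact h1.symm
    · intro n x ⟨u, hu⟩
      obtain ⟨⟨a, b⟩, rfl⟩ := QuotientAddGroup.mk'_surjective K u
      rw [← map_nsmul, Prod.smul_mk] at hu
      have : ((n • a, n • b) : N₁ × N₂) - (x, 0) ∈ K :=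
        QuotientAddGroup.eq_iff_sub_mem.mp hu
      obtain ⟨m, h1, h2⟩ := (hKmem _).mp this
      simp only [Prod.fst_sub, Prod.snd_sub, Prod.mk_sub_mk] at h1 h2
      -- h2 : -f₂ m = n • b - 0
      rw [sub_zero] at h2
      have hf2m : f₂ m = n • (-b) := by rw [smul_neg, ← h2, neg_neg]
      obtain ⟨m', hm'⟩ := hf₂.2 n m ⟨-b, hf2m.symm⟩
      refine ⟨a - f₁ m', ?_⟩
      rw [smul_sub, ← map_nsmul, hm', h1]; abel
  · -- g₂ pure embedding
    constructor
    · rw [injective_iff_map_eq_zero]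
      intro y hy
      have : ((0, y) : N₁ × N₂) ∈ K := (QuotientAddGroup.eq_zero_iff _).mp hy
      obtain ⟨m, h1, h2⟩ := (hKmem _).mp this
      have hm0 : m = 0 := hf₁.1 (by simpa using h1)
      rw [hm0, map_zero, neg_zero] at h2
      exact h2.symm
    · intro n y ⟨u, hu⟩
      obtain ⟨⟨a, b⟩, rfl⟩ := QuotientAddGroup.mk'_surjective K u
      rw [← map_nsmul, Prod.smul_mk] at hu
      have : ((n • a, n • b) : N₁ × N₂) - (0, y) ∈ K :=
        QuotientAddGroup.eq_iff_sub_mem.mp hu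
      obtain ⟨m, h1, h2⟩ := (hKmem _).mp this
      simp only [Prod.fst_sub, Prod.snd_sub, Prod.mk_sub_mk] at h1 h2
      have hf1m : f₁ m = n • a := by rw [sub_zero] at h1; exact h1
      obtain ⟨m', hm'⟩ := hf₁.2 n m ⟨a, hf1m.symm⟩
      refine ⟨b + f₂ m', ?_⟩
      rw [smul_add, ← map_nsmul, hm']
      have : -f₂ m = n • b - y := h2
      have h3 : n • b = -f₂ m + y := by rw [this]; abel
      rw [h3]; abel
  · -- commutativity
    ext m
    simp only [AddMonoidHom.comp_apply, AddMonoidHom.coe_comp, Function.comp_apply,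
      AddMonoidHom.inl_apply, AddMonoidHom.inr_apply]
    rw [QuotientAddGroup.mk'_eq_mk']
    refine ⟨(-f₁ m, f₂ m), ?_, ?_⟩
    · rw [hKmem]
      exact ⟨-m, by simp, by simp⟩
    · simp
end

section
/- Let p be a prime number. There exists an abelian p-group G of cardinality ℵ₁ such that every countable abelian p-group admits a pure embedding into G. -/
open Cardinal Function
noncomputable section
set_option linter.unusedVariables false
set_option linter.unusedSectionVars false

namespace PUnivAux
open scoped Classical
abbrev Circ := AddCircle (1:ℚ)

variable (p : ℕ)

def Tk (k : ℕ) : AddSubgroup Circ where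
  carrier := {x | p ^ k • x = 0}
  add_mem' := by intro a b ha hb; simp only [Set.mem_setOf_eq, smul_add] at *; rw [ha, hb, add_zero]
  zero_mem' := by simp
  neg_mem' := by intro a ha; simp only [Set.mem_setOf_eq, smul_neg] at *; rw [ha, neg_zero]

lemma mem_Tk {k : ℕ} {x : Circ} : x ∈ Tk p k ↔ p ^ k • x = 0 := Iff.rfl

def Tinf : AddSubgroup Circ where
  carrier := {x | ∃ n : ℕ, p ^ n • x = 0}
  add_mem' := by
    rintro a b ⟨n, hn⟩ ⟨m, hm⟩
    have ha' : p ^ (n + m) • a = 0 := by rw [pow_add, mul_comm, mul_smul, hn, smul_zero]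
    have hb' : p ^ (n + m) • b = 0 := by rw [pow_add, mul_smul, hm, smul_zero]
    exact ⟨n + m, by rw [smul_add, ha', hb', add_zero]⟩
  zero_mem' := ⟨0, by simp⟩
  neg_mem' := by rintro a ⟨n, hn⟩; exact ⟨n, by rw [smul_neg, hn, neg_zero]⟩

variable (p : ℕ) {H : Type} [AddCommGroup H]

/-- p^k H as an AddSubgroup -/
def Pk (k : ℕ) : AddSubgroup H where
  carrier := {y | ∃ z : H, p ^ k • z = y}
  add_mem' := by rintro a b ⟨z, rfl⟩ ⟨w, rfl⟩; exact ⟨z + w, by rw [smul_add]⟩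
  zero_mem' := ⟨0, smul_zero _⟩
  neg_mem' := by rintro a ⟨z, rfl⟩; exact ⟨-z, by rw [smul_neg]⟩

lemma mem_Pk {k : ℕ} {y : H} : y ∈ Pk p k ↔ ∃ z : H, p ^ k • z = y := Iff.rfl

lemma Pk_zero : Pk p 0 = (⊤ : AddSubgroup H) := by
  ext y; simp only [mem_Pk, pow_zero, one_smul, AddSubgroup.mem_top, iff_true]; exact ⟨y, rfl⟩

lemma Pk_antitone : Antitone (Pk p (H := H)) := by
  intro k l hkl
  rintro y ⟨z, rfl⟩
  exact ⟨p ^ (l - k) • z, by rw [← mul_smul, ← pow_add, Nat.add_sub_cancel' hkl]⟩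

lemma smul_mem_Pk (k : ℕ) (z : H) : p ^ k • z ∈ Pk p k := ⟨z, rfl⟩

variable (x : ℕ → H)

def F (n : ℕ) : AddSubgroup H := AddSubgroup.closure (x '' Set.Iio n)

lemma F_mono : Monotone (F x) := fun a b hab =>
  AddSubgroup.closure_mono (Set.image_mono fun t ht => lt_of_lt_of_le ht hab)

lemma F_zero : F x 0 = ⊥ := by
  unfold F
  rw [show x '' Set.Iio 0 = ∅ by ext y; simp, AddSubgroup.closure_empty]

lemma mem_F_self (n : ℕ) : x n ∈ F x (n + 1) :=
  AddSubgroup.subset_closure ⟨n, by simp, rfl⟩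

lemma F_finite (hH : IsAbelianPGroup p H) (hp : p.Prime) (n : ℕ) :
    ((F x n : AddSubgroup H) : Set H).Finite := by
  have h1 : Finite (x '' Set.Iio n) := ((Set.finite_Iio n).image x).to_subtype
  have h2 : AddGroup.FG ↥(F x n) := AddGroup.closure_finite_fg _
  have h3 : AddMonoid.IsTorsion ↥(F x n) := by
    intro g
    obtain ⟨m, hm⟩ := hH (g : H)
    rw [isOfFinAddOrder_iff_nsmul_eq_zero]
    refine ⟨p ^ m, pow_pos hp.pos m, ?_⟩
    ext
    push_cast
    simpa using hm
  have := AddCommGroup.finite_of_fg_torsion ↥(F x n) h3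
  exact (F x n : Set H).toFinite

/-- finite height -/
def FinH (h : H) : Prop := ∃ k : ℕ, h ∉ Pk p (k + 1)

def hgt (h : H) : ℕ := if hf : FinH p h then Nat.find hf else 0

lemma hgt_notmem {h : H} (hf : FinH p h) : h ∉ Pk p (hgt p h + 1) := by
  rw [hgt, dif_pos hf]; exact Nat.find_spec hf

lemma hgt_mem {h : H} (hf : FinH p h) : h ∈ Pk p (hgt p h) := by
  rw [hgt, dif_pos hf]
  rcases Nat.eq_zero_or_pos (Nat.find hf) with h0 | h0
  · rw [h0, Pk_zero]; trivial
  · have hmem := Nat.find_min hf (Nat.sub_lt h0 one_pos)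
    rw [not_not] at hmem
    have heq : Nat.find hf - 1 + 1 = Nat.find hf := by omega
    rwa [heq] at hmem

lemma hgt_eq {h : H} {e : ℕ} (he : h ∈ Pk p e) (hne : h ∉ Pk p (e + 1)) :
    FinH p h ∧ hgt p h = e := by
  have hf : FinH p h := ⟨e, hne⟩
  refine ⟨hf, le_antisymm ?_ ?_⟩
  · rw [hgt, dif_pos hf]; exact Nat.find_le hne
  · by_contra hlt
    push_neg at hlt
    exact hgt_notmem p hf (Pk_antitone p hlt he)

lemma hgt_le_of_notmem {h : H} {a : ℕ} (ha : h ∉ Pk p (a + 1)) : hgt p h ≤ a := by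
  rw [hgt, dif_pos ⟨a, ha⟩]; exact Nat.find_le ha

/-- validity for bounded (purity) coordinates -/
def ValidB (j : ℕ × H) : Prop :=
  j.2 ∈ F x (j.1 + 1) ∧ FinH p j.2 ∧ j.2 ∉ (F x j.1 ⊔ Pk p (hgt p j.2 + 1))

/-- the bounded coordinate characters -/
lemma phi_ex {j : ℕ × H} (hb : ValidB p x j) :
    (QuotientAddGroup.mk' (F x j.1 ⊔ Pk p (hgt p j.2 + 1))) j.2 ≠ 0 := by
  rw [Ne, QuotientAddGroup.mk'_apply, QuotientAddGroup.eq_zero_iff]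
  exact hb.2.2

def phi (j : ℕ × H) : H →+ Circ :=
  if hb : ValidB p x j then
    (Classical.choose (CharacterModule.exists_character_apply_ne_zero_of_ne_zero
      (phi_ex p x hb)) : _ →+ Circ).comp
      (QuotientAddGroup.mk' (F x j.1 ⊔ Pk p (hgt p j.2 + 1)))
  else 0

lemma phi_kill {j : ℕ × H} {t : H} (ht : t ∈ F x j.1 ⊔ Pk p (hgt p j.2 + 1)) :
    phi p x j t = 0 := by
  rw [phi]
  split
  · rw [AddMonoidHom.comp_apply]
    have : QuotientAddGroup.mk' (F x j.1 ⊔ Pk p (hgt p j.2 + 1)) t = 0 := by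
      rw [QuotientAddGroup.mk'_apply, QuotientAddGroup.eq_zero_iff]; exact ht
    rw [this, map_zero]
  · rfl

lemma phi_killF {j : ℕ × H} {t : H} (ht : t ∈ F x j.1) : phi p x j t = 0 :=
  phi_kill p x (AddSubgroup.mem_sup_left ht)

lemma phi_killPk {j : ℕ × H} {t : H} (ht : t ∈ Pk p (hgt p j.2 + 1)) : phi p x j t = 0 :=
  phi_kill p x (AddSubgroup.mem_sup_right ht)

lemma phi_self {j : ℕ × H} (hb : ValidB p x j) : phi p x j j.2 ≠ 0 := by
  rw [phi, dif_pos hb]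
  have := Classical.choose_spec (CharacterModule.exists_character_apply_ne_zero_of_ne_zero
    (phi_ex p x hb))
  rw [AddMonoidHom.comp_apply]
  exact this

lemma phi_val (j : ℕ × H) (g : H) : phi p x j g ∈ Tk p (hgt p j.2 + 1) := by
  rw [mem_Tk, ← map_nsmul]
  exact phi_killPk p x (smul_mem_Pk p _ g)

/-- validity for divisible (injectivity) coordinates -/
def ValidD (j : ℕ × H) : Prop := j.2 ∈ F x (j.1 + 1) ∧ j.2 ∉ F x j.1

lemma chi_ex {j : ℕ × H} (hb : ValidD x j) :
    (QuotientAddGroup.mk' (F x j.1)) j.2 ≠ 0 := by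
  rw [Ne, QuotientAddGroup.mk'_apply, QuotientAddGroup.eq_zero_iff]
  exact hb.2

def chi (j : ℕ × H) : H →+ Circ :=
  if hb : ValidD x j then
    (Classical.choose (CharacterModule.exists_character_apply_ne_zero_of_ne_zero
      (chi_ex x hb)) : _ →+ Circ).comp (QuotientAddGroup.mk' (F x j.1))
  else 0

lemma chi_killF {j : ℕ × H} {t : H} (ht : t ∈ F x j.1) : chi x j t = 0 := by
  rw [chi]
  split
  · rw [AddMonoidHom.comp_apply]
    have : QuotientAddGroup.mk' (F x j.1) t = 0 := by
      rw [QuotientAddGroup.mk'_apply, QuotientAddGroup.eq_zero_iff]; exact ht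
    rw [this, map_zero]
  · rfl

lemma chi_self {j : ℕ × H} (hb : ValidD x j) : chi x j j.2 ≠ 0 := by
  rw [chi, dif_pos hb]
  have := Classical.choose_spec (CharacterModule.exists_character_apply_ne_zero_of_ne_zero
    (chi_ex x hb))
  rw [AddMonoidHom.comp_apply]
  exact this

lemma chi_val (hH : IsAbelianPGroup p H) (j : ℕ × H) (g : H) : chi x j g ∈ Tinf p := by
  obtain ⟨n, hn⟩ := hH g
  exact ⟨n, by rw [← map_nsmul, hn, map_zero]⟩

lemma phi_invalid {j : ℕ × H} (hb : ¬ ValidB p x j) : phi p x j = 0 := by rw [phi, dif_neg hb]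

lemma chi_invalid {j : ℕ × H} (hb : ¬ ValidD x j) : chi x j = 0 := by rw [chi, dif_neg hb]

/-- The key invariant: every nonzero element of finite height has a coordinate
witnessing its height. -/
lemma invariant : ∀ m : ℕ, ∀ g : H, g ∈ F x m → g ≠ 0 → FinH p g →
    ∃ j : ℕ × H, ValidB p x j ∧ phi p x j g ≠ 0 ∧ hgt p j.2 ≤ hgt p g := by
  intro m
  induction m with
  | zero => intro g hg hg0 _; rw [F_zero, AddSubgroup.mem_bot] at hg; exact absurd hg hg0
  | succ n ih =>
    intro g hg hg0 hfin
    by_cases hgn : g ∈ F x n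
    · exact ih g hgn hg0 hfin
    by_cases hc : g ∈ F x n ⊔ Pk p (hgt p g + 1)
    · obtain ⟨f, hf, t, ht, hft⟩ := AddSubgroup.mem_sup.mp hc
      have hf0 : f ≠ 0 := by
        rintro rfl
        rw [zero_add] at hft
        rw [hft] at ht
        exact hgt_notmem p hfin ht
      have hfPk : f ∈ Pk p (hgt p g) := by
        have hfeq : f = g - t := by rw [← hft]; abel
        rw [hfeq]
        exact sub_mem (hgt_mem p hfin) (Pk_antitone p (Nat.le_succ _) ht)
      have hfnPk : f ∉ Pk p (hgt p g + 1) := fun hmem =>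
        hgt_notmem p hfin (by
          have hsum : f + t ∈ Pk p (hgt p g + 1) := add_mem hmem ht
          rwa [hft] at hsum)
      obtain ⟨hfin', hgtf⟩ := hgt_eq p hfPk hfnPk
      obtain ⟨j, hj1, hj2, hj3⟩ := ih f hf hf0 hfin'
      refine ⟨j, hj1, ?_, hgtf ▸ hj3⟩
      have hsplit : phi p x j g = phi p x j f + phi p x j t := by rw [← map_add, hft]
      rw [hsplit, phi_killPk p x (Pk_antitone p (by omega : hgt p j.2 + 1 ≤ hgt p g + 1) ht),
        add_zero]
      exact hj2
    · exact ⟨(n, g), ⟨hg, hfin, hc⟩, phi_self p x ⟨hg, hfin, hc⟩, le_refl _⟩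


/-! ## The universal group G -/

def W : Type := (Cardinal.aleph 1).out

abbrev I : Type := (ℕ × ℕ) ⊕ (ℕ ⊕ W)

def Cnstr : I → AddSubgroup Circ
  | .inl (_, k) => Tk p k
  | .inr (.inl _) => Tinf p
  | .inr (.inr _) => Tk p 1

def Vfull : AddSubgroup (I →₀ Circ) where
  carrier := {v | ∀ i, v i ∈ Cnstr p i}
  add_mem' := by intro a b ha hb i; rw [Finsupp.add_apply]; exact add_mem (ha i) (hb i)
  zero_mem' := by intro i; rw [Finsupp.zero_apply]; exact zero_mem _
  neg_mem' := by intro a ha i; rw [Finsupp.neg_apply]; exact neg_mem (ha i)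

abbrev G : Type := ↥(Vfull p)

lemma G_pgroup : IsAbelianPGroup p (G p) := by
  rintro ⟨w, hw⟩
  have hex : ∀ i : I, ∃ k : ℕ, p ^ k • w i = 0 := by
    intro i
    have hi := hw i
    rcases i with ⟨n, k⟩ | (n | v)
    · exact ⟨k, hi⟩
    · exact hi
    · exact ⟨1, hi⟩
  choose e he using hex
  refine ⟨w.support.sup e, ?_⟩
  apply Subtype.ext
  rw [show ((p ^ w.support.sup e • (⟨w, hw⟩ : G p) : G p) : I →₀ Circ)
      = p ^ w.support.sup e • w from (Vfull p).subtype.map_nsmul _ _]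
  ext i
  rw [show (p ^ w.support.sup e • w) i = p ^ w.support.sup e • w i from
    map_nsmul (Finsupp.applyAddHom i) _ _]
  by_cases hi : i ∈ w.support
  · have hle : e i ≤ w.support.sup e := Finset.le_sup hi
    rw [show w.support.sup e = e i + (w.support.sup e - e i) by omega, pow_add, mul_nsmul,
      he i, smul_zero]
    simp
  · rw [Finsupp.notMem_support_iff.mp hi, smul_zero]
    simp

def q0 : Circ := ((p : ℚ)⁻¹ : ℚ)

lemma q0_ne_zero (hp : p.Prime) : q0 p ≠ 0 := by
  rw [q0, Ne, AddCircle.coe_eq_zero_iff]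
  rintro ⟨n, hn⟩
  rw [zsmul_eq_mul, mul_one] at hn
  have hp2 : (2 : ℚ) ≤ (p : ℚ) := by exact_mod_cast hp.two_le
  have hppos : (0 : ℚ) < (p : ℚ) := by linarith
  have h1 : (n : ℚ) * (p : ℚ) = 1 := by
    rw [hn]; field_simp
  have h2 : ((n * (p : ℤ) : ℤ) : ℚ) = 1 := by push_cast; exact h1
  have h3 : n * (p : ℤ) = 1 := by exact_mod_cast h2
  have h4 : (p : ℤ) ∣ 1 := ⟨n, by linarith [h3]⟩
  have h5 : (p : ℤ) ≤ 1 := Int.le_of_dvd one_pos h4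
  have : (2 : ℤ) ≤ (p : ℤ) := by exact_mod_cast hp.two_le
  omega

lemma q0_mem (hp : p.Prime) : q0 p ∈ Tk p 1 := by
  rw [mem_Tk, pow_one, q0, ← AddCircle.coe_nsmul]
  have : p • ((p : ℚ)⁻¹) = ((p : ℚ) * (p : ℚ)⁻¹) := by
    rw [nsmul_eq_mul]
  rw [this, mul_inv_cancel₀ (by exact_mod_cast hp.pos.ne' : (p : ℚ) ≠ 0)]
  exact AddCircle.coe_period 1

lemma G_card (hp : p.Prime) : Cardinal.mk (G p) = Cardinal.aleph 1 := by
  have hW : #(W) = Cardinal.aleph 1 := Cardinal.mk_out _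
  haveI : Infinite W := by
    rw [Cardinal.infinite_iff, hW]; exact Cardinal.aleph0_le_aleph 1
  haveI : Infinite I := Sum.infinite_of_left
  haveI : Countable Circ := Quotient.countable
  haveI : Nontrivial Circ := ⟨q0 p, 0, q0_ne_zero p hp⟩
  have hI : #(I) = Cardinal.aleph 1 := by
    have h1 : #(I) = #(ℕ × ℕ) + (#(ℕ) + #(W)) := by
      rw [Cardinal.mk_sum, Cardinal.mk_sum]
      simp [Cardinal.lift_id]
    rw [h1, hW, Cardinal.mk_nat, Cardinal.mk_prod, Cardinal.mk_nat, Cardinal.lift_id,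
      Cardinal.aleph0_mul_aleph0]
    rw [Cardinal.add_eq_right (Cardinal.aleph0_le_aleph 1) (Cardinal.aleph0_le_aleph 1),
      Cardinal.add_eq_right (Cardinal.aleph0_le_aleph 1) (Cardinal.aleph0_le_aleph 1)]
  apply le_antisymm
  · have h1 : #(I →₀ Circ) = Cardinal.lift.{0} #(I) ⊔ Cardinal.lift.{0} #(Circ) :=
      Cardinal.mk_finsupp_lift_of_infinite I Circ
    rw [Cardinal.lift_id, Cardinal.lift_id, hI] at h1
    have h2 : #(G p) ≤ #(I →₀ Circ) := Cardinal.mk_le_of_injective Subtype.val_injective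
    rw [h1] at h2
    exact h2.trans (sup_le le_rfl (Cardinal.mk_le_aleph0.trans (Cardinal.aleph0_le_aleph 1)))
  · have hmem : ∀ v : W, Finsupp.single (Sum.inr (Sum.inr v) : I) (q0 p) ∈ Vfull p := by
      intro v i
      by_cases hiv : (Sum.inr (Sum.inr v) : I) = i
      · rw [← hiv, Finsupp.single_eq_same]
        exact q0_mem p hp
      · rw [Finsupp.single_eq_of_ne' hiv]
        exact zero_mem _
    have hinj : Function.Injective
        (fun v : W => (⟨Finsupp.single (Sum.inr (Sum.inr v) : I) (q0 p), hmem v⟩ : G p)) := by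
      intro v1 v2 h
      by_contra hne
      have h2 : Finsupp.single (Sum.inr (Sum.inr v1) : I) (q0 p)
          = Finsupp.single (Sum.inr (Sum.inr v2) : I) (q0 p) := congrArg Subtype.val h
      have h3 := congrArg (fun f : I →₀ Circ => f (Sum.inr (Sum.inr v1))) h2
      simp only [Finsupp.single_eq_same] at h3
      have hne2 : (Sum.inr (Sum.inr v2) : I) ≠ Sum.inr (Sum.inr v1) := fun heq =>
        hne ((Sum.inr.inj (Sum.inr.inj heq)).symm)
      rw [Finsupp.single_eq_of_ne' hne2] at h3
      exact q0_ne_zero p hp h3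
    have := Cardinal.mk_le_of_injective hinj
    rwa [hW] at this



/-! ## The embedding -/

variable (cn : ℕ × H → ℕ)

def idxB (j : ℕ × H) : I := Sum.inl (cn j, hgt p j.2 + 1)

def idxD (j : ℕ × H) : I := Sum.inr (Sum.inl (cn j))

lemma idxB_inj (hcn : Function.Injective cn) : Function.Injective (idxB p cn) := by
  intro a b hab
  rw [idxB, idxB, Sum.inl.injEq, Prod.mk.injEq] at hab
  exact hcn hab.1

lemma idxD_inj (hcn : Function.Injective cn) : Function.Injective (idxD cn) := by
  intro a b hab
  rw [idxD, idxD, Sum.inr.injEq, Sum.inl.injEq] at hab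
  exact hcn hab

def famB (g : H) : (ℕ × H) → (I →₀ Circ) :=
  fun j => Finsupp.single (idxB p cn j) (phi p x j g)

def famD (g : H) : (ℕ × H) → (I →₀ Circ) :=
  fun j => Finsupp.single (idxD cn j) (chi x j g)

lemma exists_F (hx : Function.Surjective x) (g : H) : ∃ m, g ∈ F x m := by
  obtain ⟨t, rfl⟩ := hx g; exact ⟨t + 1, mem_F_self x t⟩

lemma suppB_fin (hp : p.Prime) (hH : IsAbelianPGroup p H) (hx : Function.Surjective x) (g : H) :
    (Function.support (famB p x cn g)).Finite := by
  obtain ⟨m, hm⟩ := exists_F x hx g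
  apply Set.Finite.subset (Set.Finite.biUnion (Set.finite_Iio m)
    (fun n _ => (Set.finite_singleton n).prod (F_finite p x hH hp (n + 1))))
  intro j hj
  have hphi : phi p x j g ≠ 0 := by
    intro h0; apply hj; rw [famB, h0, Finsupp.single_zero]
  have hvb : ValidB p x j := by
    by_contra hb; rw [phi_invalid p x hb] at hphi; exact hphi rfl
  have hlt : j.1 < m := by
    by_contra hge; push_neg at hge
    exact hphi (phi_killF p x (F_mono x hge hm))
  exact Set.mem_biUnion hlt ⟨rfl, hvb.1⟩

lemma suppD_fin (hx : Function.Surjective x) (hp : p.Prime) (hH : IsAbelianPGroup p H) (g : H) :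
    (Function.support (famD x cn g)).Finite := by
  obtain ⟨m, hm⟩ := exists_F x hx g
  apply Set.Finite.subset (Set.Finite.biUnion (Set.finite_Iio m)
    (fun n _ => (Set.finite_singleton n).prod (F_finite p x hH hp (n + 1))))
  intro j hj
  have hchi : chi x j g ≠ 0 := by
    intro h0; apply hj; rw [famD, h0, Finsupp.single_zero]
  have hvb : ValidD x j := by
    by_contra hb; rw [chi_invalid x hb] at hchi; exact hchi rfl
  have hlt : j.1 < m := by
    by_contra hge; push_neg at hge
    exact hchi (chi_killF x (F_mono x hge hm))
  exact Set.mem_biUnion hlt ⟨rfl, hvb.1⟩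

def fraw (hp : p.Prime) (hH : IsAbelianPGroup p H) (hx : Function.Surjective x) :
    H →+ (I →₀ Circ) :=
  AddMonoidHom.mk' (fun g => (∑ᶠ j, famB p x cn g j) + (∑ᶠ j, famD x cn g j)) (by
    intro a b
    have h1 : ∀ j, famB p x cn (a + b) j = famB p x cn a j + famB p x cn b j := fun j => by
      rw [famB, famB, famB]; simp only [map_add, Finsupp.single_add]
    have h2 : ∀ j, famD x cn (a + b) j = famD x cn a j + famD x cn b j := fun j => by
      rw [famD, famD, famD]; simp only [map_add, Finsupp.single_add]
    calc (∑ᶠ j, famB p x cn (a + b) j) + (∑ᶠ j, famD x cn (a + b) j)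
        = (∑ᶠ j, (famB p x cn a j + famB p x cn b j)) +
          (∑ᶠ j, (famD x cn a j + famD x cn b j)) := by
          rw [finsum_congr h1, finsum_congr h2]
      _ = ((∑ᶠ j, famB p x cn a j) + (∑ᶠ j, famB p x cn b j)) +
          ((∑ᶠ j, famD x cn a j) + (∑ᶠ j, famD x cn b j)) := by
          rw [finsum_add_distrib (suppB_fin p x cn hp hH hx a) (suppB_fin p x cn hp hH hx b),
            finsum_add_distrib (suppD_fin p x cn hx hp hH a) (suppD_fin p x cn hx hp hH b)]
      _ = _ := by abel)


lemma finsum_single_apply {idx : (ℕ × H) → I} (hidx : Function.Injective idx)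
    (v : (ℕ × H) → Circ)
    (hfin : (Function.support (fun j => Finsupp.single (idx j) (v j))).Finite)
    (j0 : ℕ × H) : (∑ᶠ j, Finsupp.single (idx j) (v j)) (idx j0) = v j0 := by
  rw [← Finsupp.applyAddHom_apply (idx j0), AddMonoidHom.map_finsum _ hfin]
  simp only [Finsupp.applyAddHom_apply]
  rw [finsum_eq_single _ j0 (fun j hj => Finsupp.single_eq_of_ne' (fun h => hj (hidx h)))]
  exact Finsupp.single_eq_same

lemma finsum_single_apply_ne {idx : (ℕ × H) → I} (v : (ℕ × H) → Circ)
    (hfin : (Function.support (fun j => Finsupp.single (idx j) (v j))).Finite)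
    (i : I) (hi : ∀ j, idx j ≠ i) : (∑ᶠ j, Finsupp.single (idx j) (v j)) i = 0 := by
  rw [← Finsupp.applyAddHom_apply i, AddMonoidHom.map_finsum _ hfin]
  simp only [Finsupp.applyAddHom_apply]
  exact finsum_eq_zero_of_forall_eq_zero (fun j => Finsupp.single_eq_of_ne' (hi j))

variable (hp : p.Prime) (hH : IsAbelianPGroup p H) (hx : Function.Surjective x)
  (hcn : Function.Injective cn)

include hp hH hx hcn

lemma fraw_applyB (g : H) (j0 : ℕ × H) :
    (fraw p x cn hp hH hx) g (idxB p cn j0) = phi p x j0 g := by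
  show ((∑ᶠ j, famB p x cn g j) + (∑ᶠ j, famD x cn g j)) (idxB p cn j0) = _
  rw [Finsupp.add_apply]
  have h1 : (∑ᶠ j, famB p x cn g j) (idxB p cn j0) = phi p x j0 g :=
    finsum_single_apply (idxB_inj p cn hcn) _ (suppB_fin p x cn hp hH hx g) j0
  have h2 : (∑ᶠ j, famD x cn g j) (idxB p cn j0) = 0 :=
    finsum_single_apply_ne _ (suppD_fin p x cn hx hp hH g) _
      (fun j => by rw [idxD, idxB]; exact fun h => by cases h)
  rw [h1, h2, add_zero]

lemma fraw_applyD (g : H) (j0 : ℕ × H) :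
    (fraw p x cn hp hH hx) g (idxD cn j0) = chi x j0 g := by
  show ((∑ᶠ j, famB p x cn g j) + (∑ᶠ j, famD x cn g j)) (idxD cn j0) = _
  rw [Finsupp.add_apply]
  have h1 : (∑ᶠ j, famB p x cn g j) (idxD cn j0) = 0 :=
    finsum_single_apply_ne _ (suppB_fin p x cn hp hH hx g) _
      (fun j => by rw [idxD, idxB]; exact fun h => by cases h)
  have h2 : (∑ᶠ j, famD x cn g j) (idxD cn j0) = chi x j0 g :=
    finsum_single_apply (idxD_inj cn hcn) _ (suppD_fin p x cn hx hp hH g) j0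
  rw [h1, h2, zero_add]

lemma fraw_mem (g : H) : (fraw p x cn hp hH hx) g ∈ Vfull p := by
  intro i
  show ((∑ᶠ j, famB p x cn g j) + (∑ᶠ j, famD x cn g j)) i ∈ Cnstr p i
  rcases i with ⟨n, k⟩ | (n | w)
  · rw [Finsupp.add_apply]
    have h2 : (∑ᶠ j, famD x cn g j) (Sum.inl (n, k)) = 0 :=
      finsum_single_apply_ne _ (suppD_fin p x cn hx hp hH g) _
        (fun j => by rw [idxD]; exact fun h => by cases h)
    rw [h2, add_zero]
    by_cases hex : ∃ j0 : ℕ × H, idxB p cn j0 = Sum.inl (n, k)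
    · obtain ⟨j0, hj0⟩ := hex
      have h1 : (∑ᶠ j, famB p x cn g j) (idxB p cn j0) = phi p x j0 g :=
        finsum_single_apply (idxB_inj p cn hcn) _ (suppB_fin p x cn hp hH hx g) j0
      have hk : k = hgt p j0.2 + 1 := by
        rw [idxB, Sum.inl.injEq, Prod.mk.injEq] at hj0
        exact hj0.2.symm
      have hval : (∑ᶠ j, famB p x cn g j) (Sum.inl (n, k)) = phi p x j0 g := by
        rw [← hj0]; exact h1
      rw [hval]
      show phi p x j0 g ∈ Tk p k
      rw [hk]
      exact phi_val p x j0 g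
    · push_neg at hex
      have h0 : (∑ᶠ j, famB p x cn g j) (Sum.inl (n, k)) = 0 :=
        finsum_single_apply_ne _ (suppB_fin p x cn hp hH hx g) _ hex
      rw [h0]
      exact zero_mem _
  · rw [Finsupp.add_apply]
    have h1 : (∑ᶠ j, famB p x cn g j) (Sum.inr (Sum.inl n)) = 0 :=
      finsum_single_apply_ne _ (suppB_fin p x cn hp hH hx g) _
        (fun j => by rw [idxB]; exact fun h => by cases h)
    rw [h1, zero_add]
    by_cases hex : ∃ j0 : ℕ × H, idxD cn j0 = Sum.inr (Sum.inl n)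
    · obtain ⟨j0, hj0⟩ := hex
      have h2 : (∑ᶠ j, famD x cn g j) (idxD cn j0) = chi x j0 g :=
        finsum_single_apply (idxD_inj cn hcn) _ (suppD_fin p x cn hx hp hH g) j0
      have hval : (∑ᶠ j, famD x cn g j) (Sum.inr (Sum.inl n)) = chi x j0 g := by
        rw [← hj0]; exact h2
      rw [hval]
      exact chi_val p x hH j0 g
    · push_neg at hex
      have h0 : (∑ᶠ j, famD x cn g j) (Sum.inr (Sum.inl n)) = 0 :=
        finsum_single_apply_ne _ (suppD_fin p x cn hx hp hH g) _ hex
      rw [h0]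
      exact zero_mem _
  · rw [Finsupp.add_apply]
    have h1 : (∑ᶠ j, famB p x cn g j) (Sum.inr (Sum.inr w)) = 0 :=
      finsum_single_apply_ne _ (suppB_fin p x cn hp hH hx g) _
        (fun j => by rw [idxB]; exact fun h => by cases h)
    have h2 : (∑ᶠ j, famD x cn g j) (Sum.inr (Sum.inr w)) = 0 :=
      finsum_single_apply_ne _ (suppD_fin p x cn hx hp hH g) _
        (fun j => by rw [idxD]; exact fun h => by cases h)
    rw [h1, h2, add_zero]
    exact zero_mem _

def femb : H →+ G p :=
  AddMonoidHom.codRestrict (fraw p x cn hp hH hx) (Vfull p) (fraw_mem p x cn hp hH hx hcn)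

lemma femb_coe (g : H) : ((femb p x cn hp hH hx hcn g : G p) : I →₀ Circ) =
    (fraw p x cn hp hH hx) g := rfl


lemma femb_inj : Function.Injective (femb p x cn hp hH hx hcn) := by
  rw [injective_iff_map_eq_zero]
  intro g hg
  by_contra hg0
  have hfg : (fraw p x cn hp hH hx) g = 0 := congrArg Subtype.val hg
  have hEx : ∃ n0, g ∈ F x (n0 + 1) := by
    obtain ⟨t, rfl⟩ := hx g; exact ⟨t, mem_F_self x t⟩
  have hmem : g ∈ F x (Nat.find hEx + 1) := Nat.find_spec hEx
  have hnot : g ∉ F x (Nat.find hEx) := by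
    rcases Nat.eq_zero_or_pos (Nat.find hEx) with h0 | h0
    · rw [h0, F_zero]
      intro hb; rw [AddSubgroup.mem_bot] at hb; exact hg0 hb
    · intro hb
      apply Nat.find_min hEx (show Nat.find hEx - 1 < Nat.find hEx by omega)
      have heq : Nat.find hEx - 1 + 1 = Nat.find hEx := by omega
      rwa [heq]
  have hvd : ValidD x (Nat.find hEx, g) := ⟨hmem, hnot⟩
  apply chi_self x hvd
  have heval := fraw_applyD p x cn hp hH hx hcn g (Nat.find hEx, g)
  rw [hfg] at heval
  rw [← heval]
  rfl

lemma femb_pure : ∀ (n : ℕ) (g : H),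
    (∃ u : G p, n • u = femb p x cn hp hH hx hcn g) → ∃ g' : H, n • g' = g := by
  rintro n g ⟨u, hu⟩
  rcases Nat.eq_zero_or_pos n with rfl | hn
  · have hg : g = 0 := by
      apply femb_inj p x cn hp hH hx hcn
      rw [map_zero, ← hu, zero_nsmul]
    exact ⟨0, by rw [hg, smul_zero]⟩
  have hn0 : n ≠ 0 := hn.ne'
  -- Step 1 : g is divisible by p ^ a where a = n.factorization p
  have hstep1 : g ∈ Pk p (n.factorization p) := by
    by_contra hga
    have ha1 : 1 ≤ n.factorization p := by
      rcases Nat.eq_zero_or_pos (n.factorization p) with h0 | h0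
      · rw [h0, Pk_zero] at hga; exact absurd trivial hga
      · exact h0
    have hwit : g ∉ Pk p ((n.factorization p - 1) + 1) := by
      have heq : n.factorization p - 1 + 1 = n.factorization p := by omega
      rwa [heq]
    have hfin : FinH p g := ⟨n.factorization p - 1, hwit⟩
    have hle : hgt p g + 1 ≤ n.factorization p := by
      have := hgt_le_of_notmem p hwit; omega
    have hg0 : g ≠ 0 := fun h => hga (h ▸ zero_mem _)
    obtain ⟨m0, hm0⟩ := exists_F x hx g
    obtain ⟨j, hj1, hj2, hj3⟩ := invariant p x m0 g hm0 hg0 hfin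
    apply hj2
    have hle2 : hgt p j.2 + 1 ≤ n.factorization p := by omega
    -- the coordinate value of u at idxB j is killed by p ^ (hgt j.2 + 1)
    have hval : p ^ (hgt p j.2 + 1) • ((u : I →₀ Circ) (idxB p cn j)) = 0 := u.2 (idxB p cn j)
    have h1 : n • (u : I →₀ Circ) = (fraw p x cn hp hH hx) g := by
      have hcoe := congrArg Subtype.val hu
      rwa [show ((n • u : G p) : I →₀ Circ) = n • (u : I →₀ Circ) from
        map_nsmul (Vfull p).subtype n u] at hcoe
    have happ : (n • (u : I →₀ Circ)) (idxB p cn j) = n • ((u : I →₀ Circ) (idxB p cn j)) :=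
      map_nsmul (Finsupp.applyAddHom (idxB p cn j)) n _
    have hev : n • ((u : I →₀ Circ) (idxB p cn j)) = phi p x j g := by
      rw [← happ, h1]
      exact fraw_applyB p x cn hp hH hx hcn g j
    rw [← hev]
    have hneq : n = p ^ (hgt p j.2 + 1) *
        (p ^ (n.factorization p - (hgt p j.2 + 1)) * (n / p ^ n.factorization p)) := by
      rw [← mul_assoc, ← pow_add, Nat.add_sub_cancel' hle2]
      exact (Nat.ordProj_mul_ordCompl_eq_self n p).symm
    rw [hneq, mul_nsmul, hval, smul_zero]
  -- Step 2 : produce the witness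
  obtain ⟨g1, hg1⟩ := hstep1
  obtain ⟨r, hr⟩ := hH g1
  rcases Nat.eq_zero_or_pos r with rfl | hr1
  · rw [pow_zero, one_nsmul] at hr
    exact ⟨0, by rw [smul_zero, ← hg1, hr, smul_zero]⟩
  have hcop : Nat.Coprime (n / p ^ n.factorization p) (p ^ r) :=
    Nat.Coprime.pow_right r
      ((Nat.Prime.coprime_iff_not_dvd hp).mpr (Nat.not_dvd_ordCompl hp hn0)).symm
  obtain ⟨b, -, hb⟩ := Nat.exists_mul_mod_eq_one_of_coprime hcop
    (Nat.one_lt_pow hr1.ne' hp.one_lt)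
  refine ⟨b • g1, ?_⟩
  have hc : (n / p ^ n.factorization p) * b =
      p ^ r * ((n / p ^ n.factorization p) * b / p ^ r) + 1 := by
    have hdm := Nat.div_add_mod ((n / p ^ n.factorization p) * b) (p ^ r)
    rw [hb] at hdm
    exact hdm.symm
  have hcg : ((n / p ^ n.factorization p) * b) • g1 = g1 := by
    rw [hc, add_nsmul, mul_nsmul, hr, smul_zero, zero_add, one_nsmul]
  calc n • b • g1 = (b * n) • g1 := (mul_nsmul g1 b n).symm
    _ = (((n / p ^ n.factorization p) * b) * p ^ n.factorization p) • g1 := by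
        rw [show b * n = ((n / p ^ n.factorization p) * b) * p ^ n.factorization p by
          conv_lhs => rw [← Nat.ordProj_mul_ordCompl_eq_self n p]
          ring]
    _ = p ^ n.factorization p • (((n / p ^ n.factorization p) * b) • g1) := mul_nsmul g1 _ _
    _ = p ^ n.factorization p • g1 := by rw [hcg]
    _ = g := hg1



omit hp hH hx hcn in
theorem main (p : ℕ) (hp : p.Prime) :
    ∃ (G : Type) (_ : AddCommGroup G), IsAbelianPGroup p G ∧
      Cardinal.mk G = Cardinal.aleph 1 ∧
      ∀ (H : Type) (_ : AddCommGroup H), IsAbelianPGroup p H →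
        Cardinal.mk H ≤ Cardinal.aleph0 → ∃ f : H →+ G, IsPureEmbedding f := by
  refine ⟨G p, inferInstance, G_pgroup p, G_card p hp, ?_⟩
  intro H instH hH hcard
  haveI : Countable H := Cardinal.mk_le_aleph0_iff.mp hcard
  obtain ⟨x, hx⟩ := exists_surjective_nat H
  obtain ⟨cn, hcn⟩ := (countable_iff_exists_injective (α := ℕ × H)).mp inferInstance
  exact ⟨femb p x cn hp hH hx hcn,
    femb_inj p x cn hp hH hx hcn, femb_pure p x cn hp hH hx hcn⟩

end PUnivAux


theorem exists_p_group_aleph_one_universal_for_countable (p : ℕ) (hp : p.Prime) :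
    ∃ (G : Type) (_ : AddCommGroup G), IsAbelianPGroup p G ∧
      Cardinal.mk G = Cardinal.aleph 1 ∧
      ∀ (H : Type) (_ : AddCommGroup H), IsAbelianPGroup p H →
        Cardinal.mk H ≤ Cardinal.aleph0 → ∃ f : H →+ G, IsPureEmbedding f := by
  exact PUnivAux.main p hp

end
end
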